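/- Let F_{n,p} be the n×n matrix with F(i,j) = -1 if i = j+1, F(i,j) = 1 if j - i ≥ p-1, else 0. For indices 1 ≤ i_1 < ... < i_k ≤ n, the principal minor M(i_1,...,i_k) of F_{n,p} obtained by deleting rows and columns i_1,...,i_k satisfies M(i_1,...,i_k) = det(F_{i_1-1,p}) * det(F_{i_2-i_1-1,p}) * ... * det(F_{i_k-i_{k-1}-1,p}) * det(F_{n-i_k,p}), where det of the empty (0×0) matrix is 1. -/

import Mathlib

def F (n p : ℕ) : Matrix (Fin n) (Fin n) ℤ := fun i j =>
  if (i : ℕ) = (j : ℕ) + 1 then -1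
  else if (p : ℤ) - 1 ≤ (j : ℤ) - (i : ℤ) then 1
  else 0

def extIdx (n k : ℕ) (i : Fin k → ℕ) : ℕ → ℕ := fun t =>
  if h : t = 0 then 0
  else if h' : t ≤ k then i ⟨t - 1, by omega⟩
  else n + 1

theorem stmt15 (n p k : ℕ) (hn : 0 < n) (hp : 0 < p) (hk : 0 < k) (hkn : k ≤ n)
    (i : Fin k → ℕ) (hmono : StrictMono i)
    (hbound : ∀ t, 1 ≤ i t ∧ i t ≤ n) :
    Matrix.det (Matrix.of
        (fun a b : {j : Fin n // ∀ t, (j : ℕ) + 1 ≠ i t} => F n p a.1 b.1)) =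
      ∏ t ∈ Finset.range (k + 1),
        (F (extIdx n k i (t + 1) - extIdx n k i t - 1) p).det := by
  classical
  set E := extIdx n k i with hE
  have hE0 : E 0 = 0 := by simp [hE, extIdx]
  have hEk1 : E (k + 1) = n + 1 := by simp [hE, extIdx]
  have hEval : ∀ t (h1 : 1 ≤ t) (h2 : t ≤ k), E t = i ⟨t - 1, by omega⟩ := by
    intro t h1 h2
    simp only [hE, extIdx]
    rw [dif_neg (by omega), dif_pos h2]
  have hEval' : ∀ (t : ℕ) (ht : t < k), E (t + 1) = i ⟨t, ht⟩ := by
    intro t ht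
    rw [hEval (t + 1) (by omega) (by omega)]
    rfl
  have hEmono : ∀ s t, s < t → t ≤ k + 1 → E s < E t := by
    intro s t hst ht
    rcases Nat.eq_zero_or_pos s with hs | hs
    · subst hs; rw [hE0]
      rcases le_or_gt t k with h | h
      · rw [hEval t (by omega) h]
        exact (hbound _).1
      · have htk : t = k + 1 := by omega
        rw [htk, hEk1]; omega
    · have hsk : s ≤ k := by omega
      rw [hEval s (by omega) hsk]
      rcases le_or_gt t k with h | h
      · rw [hEval t (by omega) h]
        exact hmono (by simp only [Fin.lt_def]; omega)
      · have htk : t = k + 1 := by omega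
        rw [htk, hEk1]
        have := (hbound ⟨s - 1, by omega⟩).2; omega
  -- grading function
  set c : ℕ → ℕ := fun j => (Finset.univ.filter (fun t : Fin k => i t ≤ j)).card with hc
  have hck : ∀ j, c j ≤ k := by
    intro j
    calc c j ≤ (Finset.univ : Finset (Fin k)).card := Finset.card_filter_le _ _
    _ = k := by simp
  have L1 : ∀ (j : ℕ) (t : Fin k), i t ≤ j ↔ (t : ℕ) < c j := by
    intro j t
    constructor
    · intro h
      have hsub : Finset.Iic t ⊆ Finset.univ.filter (fun s : Fin k => i s ≤ j) := by
        intro s hs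
        simp only [Finset.mem_Iic] at hs
        simp only [Finset.mem_filter, Finset.mem_univ, true_and]
        exact le_trans (hmono.monotone hs) h
      have := Finset.card_le_card hsub
      rw [Fin.card_Iic] at this
      simp only [hc]
      omega
    · intro h
      by_contra hcon
      push_neg at hcon
      have hsub : Finset.univ.filter (fun s : Fin k => i s ≤ j) ⊆ Finset.Iio t := by
        intro s hs
        simp only [Finset.mem_filter, Finset.mem_univ, true_and] at hs
        simp only [Finset.mem_Iio]
        by_contra hst
        push_neg at hst
        exact absurd (le_trans (hmono.monotone hst) hs) (by omega)
      have := Finset.card_le_card hsub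
      rw [Fin.card_Iio] at this
      simp only [hc] at h
      omega
  -- characterization of c on remaining indices
  have L2 : ∀ (a : ℕ), a < n → (∀ t, a + 1 ≠ i t) → ∀ t ≤ k,
      (c a = t ↔ E t ≤ a ∧ a + 1 < E (t + 1)) := by
    intro a han harem t htk
    constructor
    · intro hca
      constructor
      · rcases Nat.eq_zero_or_pos t with h0 | h0
        · subst h0; rw [hE0]; omega
        · rw [hEval t (by omega) (by omega)]
          exact (L1 a ⟨t - 1, by omega⟩).2 (show t - 1 < c a by omega)
      · rcases lt_or_eq_of_le htk with h0 | h0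
        · rw [hEval' t h0]
          have hnle : ¬ i ⟨t, h0⟩ ≤ a := fun h => by
            have h2 : t < c a := (L1 a ⟨t, h0⟩).1 h
            omega
          have hne := harem ⟨t, h0⟩
          omega
        · subst h0; rw [hEk1]; omega
    · rintro ⟨h1, h2⟩
      have hge : t ≤ c a := by
        rcases Nat.eq_zero_or_pos t with h0 | h0
        · omega
        · rw [hEval t (by omega) (by omega)] at h1
          have h3 : t - 1 < c a := (L1 a ⟨t - 1, by omega⟩).1 h1
          omega
      have hle : c a ≤ t := by
        rcases lt_or_eq_of_le htk with h0 | h0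
        · rw [hEval' t h0] at h2
          by_contra hcon
          push_neg at hcon
          have h3 : i ⟨t, h0⟩ ≤ a := (L1 a ⟨t, h0⟩).2 (show (t : ℕ) < c a from hcon)
          omega
        · subst h0; exact hck a
      omega
  set M : Matrix {j : Fin n // ∀ t, (j : ℕ) + 1 ≠ i t}
      {j : Fin n // ∀ t, (j : ℕ) + 1 ≠ i t} ℤ :=
    Matrix.of (fun a b : {j : Fin n // ∀ t, (j : ℕ) + 1 ≠ i t} => F n p a.1 b.1) with hM
  set bf : {j : Fin n // ∀ t, (j : ℕ) + 1 ≠ i t} → ℕ := fun a => c a.1 with hbf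
  have hBT : M.BlockTriangular bf := by
    intro a a' hlt
    have hlt' : c a'.1.1 < c a.1.1 := hlt
    have hk' : c a'.1.1 < k := lt_of_lt_of_le hlt' (hck _)
    have h1 : i ⟨c a'.1.1, hk'⟩ ≤ a.1.1 := (L1 _ ⟨c a'.1.1, hk'⟩).2 hlt'
    have h2 : ¬ i ⟨c a'.1.1, hk'⟩ ≤ a'.1.1 := fun h =>
      Nat.lt_irrefl _ ((L1 a'.1.1 ⟨c a'.1.1, hk'⟩).1 h)
    have h3 := a'.2 ⟨c a'.1.1, hk'⟩
    have hge2 : a'.1.1 + 2 ≤ a.1.1 := by omega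
    show F n p a.1 a'.1 = 0
    simp only [F]
    rw [if_neg (by omega), if_neg (by omega)]
  have hdet := hBT.det
  -- block det equality for each t
  have hblock : ∀ t ≤ k, (M.toSquareBlock bf t).det = (F (E (t + 1) - E t - 1) p).det := by
    intro t htk
    set m := E (t + 1) - E t - 1 with hm
    have hEt1 : E t < E (t + 1) := hEmono t (t + 1) (by omega) (by omega)
    have hEn : E (t + 1) ≤ n + 1 := by
      rcases lt_or_eq_of_le htk with h0 | h0
      · rw [hEval' t h0]
        exact le_trans (hbound ⟨t, h0⟩).2 (by omega)
      · subst h0; rw [hEk1]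
    have key : ∀ a : {a : {j : Fin n // ∀ t, (j : ℕ) + 1 ≠ i t} // bf a = t},
        E t ≤ a.1.1.1 ∧ a.1.1.1 + 1 < E (t + 1) := by
      intro a
      exact (L2 a.1.1.1 a.1.1.2 a.1.2 t htk).1 a.2
    have hval : ∀ x : ℕ, x < m → E t + x < n ∧ (∀ s, E t + x + 1 ≠ i s) := by
      intro x hx
      refine ⟨by omega, ?_⟩
      intro s h
      have hs1 : E (s.1 + 1) = i s := by rw [hEval' s.1 s.2]
      rcases le_or_gt (s.1 + 1) t with hst | hst
      · have : E (s.1 + 1) ≤ E t := by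
          rcases Nat.lt_or_ge (s.1 + 1) t with h' | h'
          · exact le_of_lt (hEmono _ _ h' (by omega))
          · have heq : s.1 + 1 = t := by omega
            rw [heq]
        omega
      · have : E (t + 1) ≤ E (s.1 + 1) := by
          rcases Nat.lt_or_ge (t + 1) (s.1 + 1) with h' | h'
          · exact le_of_lt (hEmono _ _ h' (by omega))
          · have heq : t + 1 = s.1 + 1 := by omega
            rw [heq]
        omega
    have hcx : ∀ x : ℕ, x < m → c (E t + x) = t := by
      intro x hx
      exact (L2 (E t + x) (hval x hx).1 (hval x hx).2 t htk).2 ⟨by omega, by omega⟩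
    let e : {a : {j : Fin n // ∀ t, (j : ℕ) + 1 ≠ i t} // bf a = t} ≃ Fin m :=
      { toFun := fun a => ⟨a.1.1.1 - E t, by have := key a; omega⟩
        invFun := fun x => ⟨⟨⟨E t + x.1, (hval x.1 x.2).1⟩, (hval x.1 x.2).2⟩,
          hcx x.1 x.2⟩
        left_inv := by
          intro a
          have := key a
          apply Subtype.ext; apply Subtype.ext; apply Fin.ext
          simp only []
          show E t + (a.1.1.1 - E t) = a.1.1.1
          omega
        right_inv := by
          intro x
          apply Fin.ext
          show E t + x.1 - E t = x.1
          omega }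
    have hmat : M.toSquareBlock bf t = (F m p).submatrix e e := by
      ext a a'
      have ha := key a
      have ha' := key a'
      simp only [Matrix.toSquareBlock_def, Matrix.submatrix_apply, Matrix.of_apply]
      show F n p a.1.1 a'.1.1 = F m p (e a) (e a')
      have hea : ((e a : Fin m) : ℕ) = a.1.1.1 - E t := rfl
      have hea' : ((e a' : Fin m) : ℕ) = a'.1.1.1 - E t := rfl
      simp only [F, hea, hea']
      have hc1 : ((a.1.1.1 : ℕ) = a'.1.1.1 + 1) ↔
          (a.1.1.1 - E t = a'.1.1.1 - E t + 1) := by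
        have h1 := ha.1; have h2 := ha'.1; omega
      have hc2 : ((p : ℤ) - 1 ≤ (a'.1.1.1 : ℤ) - (a.1.1.1 : ℤ)) ↔
          ((p : ℤ) - 1 ≤ ((a'.1.1.1 - E t : ℕ) : ℤ) - ((a.1.1.1 - E t : ℕ) : ℤ)) := by
        have h1 := ha.1; have h2 := ha'.1; omega
      exact if_congr hc1 rfl (if_congr hc2 rfl rfl)
    rw [hmat, Matrix.det_submatrix_equiv_self]
  show M.det = _
  rw [hdet]
  have hsub : Finset.univ.image bf ⊆ Finset.range (k + 1) := by
    intro t ht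
    simp only [Finset.mem_image] at ht
    obtain ⟨a, _, rfl⟩ := ht
    simp only [Finset.mem_range]
    have : c a.1.1 ≤ k := hck a.1.1
    exact lt_of_le_of_lt this (by omega)
  rw [Finset.prod_congr rfl (fun t ht => hblock t (by
    have := hsub ht; simp only [Finset.mem_range] at this; omega))]
  refine Finset.prod_subset hsub ?_
  intro t ht hnot
  simp only [Finset.mem_range] at ht
  have hempty : IsEmpty {a : {j : Fin n // ∀ t, (j : ℕ) + 1 ≠ i t} // bf a = t} := by
    constructor
    intro a
    exact hnot (Finset.mem_image.2 ⟨a.1, Finset.mem_univ _, a.2⟩)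
  rw [← hblock t (by omega)]
  exact Matrix.det_isEmpty
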